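/- If X ∼ χ²_k is a central chi-square random variable with k degrees of freedom, then for any x > 0, P(X ≥ k + 2√(kx) + 2x) ≤ e^{−x}. -/

import Mathlib

open MeasureTheory ProbabilityTheory Set

/-- Density of the χ²_k distribution with k (real) degrees of freedom. -/
noncomputable def chiSqPDF (k x : ℝ) : ℝ :=
  if 0 ≤ x then
    x ^ (k / 2 - 1) * Real.exp (-x / 2) / (2 ^ (k / 2) * Real.Gamma (k / 2))
  else 0

lemma chiSqPDF_nonneg (k x : ℝ) (hk : 0 < k) : 0 ≤ chiSqPDF k x := by
  unfold chiSqPDF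
  split_ifs with h
  · have := Real.Gamma_pos_of_pos (by linarith : (0:ℝ) < k / 2)
    positivity
  · exact le_rfl

theorem laurent_massart_chi_sq_tail
    {Ω : Type*} [MeasurableSpace Ω] (Pr : Measure Ω) [IsProbabilityMeasure Pr]
    (k : ℕ) (hk : 0 < k)
    (X : Ω → ℝ) (hmeas : Measurable X)
    (hlaw : Measure.map X Pr =
      volume.withDensity fun x => ENNReal.ofReal (chiSqPDF (k : ℝ) x))
    (x : ℝ) (hx : 0 < x) :
    Pr {ω | (k : ℝ) + 2 * Real.sqrt (k * x) + 2 * x ≤ X ω}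
      ≤ ENNReal.ofReal (Real.exp (-x)) := by
  set K : ℝ := (k : ℝ) with hKdef
  have hK0 : (0:ℝ) < K := by rw [hKdef]; exact_mod_cast hk
  set s : ℝ := Real.sqrt (K * x) with hsdef
  have hs0 : 0 ≤ s := Real.sqrt_nonneg _
  set t : ℝ := K + 2 * s + 2 * x with htdef
  have htK : K ≤ t := by rw [htdef]; nlinarith
  have ht0 : (0:ℝ) < t := lt_of_lt_of_le hK0 htK
  set a : ℝ := K / 2 with hadef
  have ha0 : (0:ℝ) < a := by rw [hadef]; positivity
  set l : ℝ := (t - K) / (2 * t) with hldef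
  have hl0 : (0:ℝ) ≤ l := by
    rw [hldef]; exact div_nonneg (by linarith) (by linarith)
  set c : ℝ := 1/2 - l with hcdef
  have hc : c = K / (2 * t) := by
    rw [hcdef, hldef]
    field_simp
    ring
  have hc0 : (0:ℝ) < c := by rw [hc]; positivity
  have h2c : 2 * c = K / t := by
    rw [hc]
    field_simp
  have hlt : l * t = s + x := by
    rw [hldef, htdef]
    have hne : (0:ℝ) < K + 2 * s + 2 * x := by linarith
    field_simp
    ring
  set u : ℝ := Real.sqrt (x / K) with hudef
  have hu0 : 0 ≤ u := Real.sqrt_nonneg _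
  have hu2 : u ^ 2 = x / K := by
    rw [hudef]; exact Real.sq_sqrt (by positivity)
  have hxu : x = K * u ^ 2 := by
    rw [hu2]; field_simp
  have hsu : s = K * u := by
    rw [hsdef, hudef, show K * x = K^2 * (x / K) by field_simp,
      Real.sqrt_mul (by positivity) _, Real.sqrt_sq hK0.le]
  have htk : t / K = 1 + 2 * u + (2 * u) ^ 2 / 2 := by
    rw [htdef, hsu, hxu]
    field_simp
  clear_value K s t a l c u
  subst hadef
  -- rewrite probability as an integral of the density
  rw [show {ω | t ≤ X ω} = X ⁻¹' (Ici t) from rfl, ← Measure.map_apply hmeas measurableSet_Ici, hlaw,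
    withDensity_apply _ measurableSet_Ici]
  -- pointwise tilting bound on Ici t
  have hstep1 : ∫⁻ y in Ici t, ENNReal.ofReal (chiSqPDF K y) ≤
      ∫⁻ y in Ici t, ENNReal.ofReal (Real.exp (l * (y - t)) * chiSqPDF K y) := by
    refine setLIntegral_mono' measurableSet_Ici fun y hy => ?_
    apply ENNReal.ofReal_le_ofReal
    have h1 : (1:ℝ) ≤ Real.exp (l * (y - t)) := by
      rw [← Real.exp_zero]
      exact Real.exp_le_exp.2 (mul_nonneg hl0 (by simpa using (mem_Ici.mp hy)))
    nlinarith [chiSqPDF_nonneg K y hK0]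
  have hstep2 : ∫⁻ y in Ici t, ENNReal.ofReal (Real.exp (l * (y - t)) * chiSqPDF K y) ≤
      ∫⁻ y in Ioi 0, ENNReal.ofReal (Real.exp (l * (y - t)) * chiSqPDF K y) :=
    lintegral_mono_set (fun y hy => lt_of_lt_of_le ht0 hy)
  set M : ℝ := Real.exp (-(l * t)) * (2 * c) ^ (-(K / 2)) with hMdef
  have hM0 : 0 ≤ M := by
    have := Real.rpow_nonneg (by linarith : (0:ℝ) ≤ 2 * c) (-(K / 2))
    positivity
  have hG : (0:ℝ) < Real.Gamma (K / 2) := Real.Gamma_pos_of_pos ha0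
  have h2a : (0:ℝ) < (2:ℝ) ^ (K / 2) := Real.rpow_pos_of_pos (by norm_num) _
  have hca : (0:ℝ) < c ^ (K / 2) := Real.rpow_pos_of_pos hc0 _
  have hkey2 : (2 * c) ^ (-(K / 2)) = ((2:ℝ) ^ (K / 2) * c ^ (K / 2))⁻¹ := by
    rw [Real.rpow_neg (by linarith), Real.mul_rpow (by norm_num) hc0.le]
  have hpoint : ∀ y ∈ Ioi (0:ℝ), Real.exp (l * (y - t)) * chiSqPDF K y
      = M * gammaPDFReal (K / 2) c y := by
    intro y hy
    have hy0 : (0:ℝ) ≤ y := le_of_lt hy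
    have hexp : Real.exp (l * (y - t)) * Real.exp (-y / 2)
        = Real.exp (-(l * t)) * Real.exp (-(c * y)) := by
      rw [← Real.exp_add, ← Real.exp_add]
      congr 1
      rw [hcdef]; ring
    simp only [chiSqPDF, gammaPDFReal, if_pos hy0, hMdef, hkey2]
    rw [show Real.exp (l * (y - t)) * (y ^ (K / 2 - 1) * Real.exp (-y / 2)
        / (2 ^ (K / 2) * Real.Gamma (K / 2)))
        = (Real.exp (l * (y - t)) * Real.exp (-y / 2)) * y ^ (K / 2 - 1)
          / (2 ^ (K / 2) * Real.Gamma (K / 2)) from by ring, hexp]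
    field_simp
  calc ∫⁻ y in Ici t, ENNReal.ofReal (chiSqPDF K y)
      ≤ ∫⁻ y in Ioi 0, ENNReal.ofReal (Real.exp (l * (y - t)) * chiSqPDF K y) :=
        le_trans hstep1 hstep2
    _ = ∫⁻ y in Ioi 0, ENNReal.ofReal M * ENNReal.ofReal (gammaPDFReal (K / 2) c y) := by
        refine setLIntegral_congr_fun measurableSet_Ioi (fun y hy => ?_)
        rw [hpoint y hy, ENNReal.ofReal_mul hM0]
    _ = ENNReal.ofReal M * ∫⁻ y in Ioi 0, gammaPDF (K / 2) c y := by
        rw [lintegral_const_mul _ (measurable_gammaPDFReal (K / 2) c).ennreal_ofReal]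
        rfl
    _ ≤ ENNReal.ofReal M * 1 := by
        gcongr
        rw [← lintegral_gammaPDF_eq_one ha0 hc0]
        exact setLIntegral_le_lintegral _ _
    _ ≤ ENNReal.ofReal (Real.exp (-x)) := by
        rw [mul_one]
        apply ENNReal.ofReal_le_ofReal
        have hquad : t / K ≤ Real.exp (2 * u) := by
          rw [htk]; exact Real.quadratic_le_exp_of_nonneg (by linarith)
        have hpow : (2 * c) ^ (-(K / 2)) = (t / K) ^ (K / 2) := by
          rw [h2c, Real.rpow_neg (by positivity), ← Real.inv_rpow (by positivity),
            inv_div]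
        have hbound : (t / K) ^ (K / 2) ≤ Real.exp s := by
          calc (t / K) ^ (K / 2) ≤ (Real.exp (2 * u)) ^ (K / 2) :=
                Real.rpow_le_rpow (by positivity) hquad ha0.le
            _ = Real.exp (2 * u * (K / 2)) := (Real.exp_mul _ _).symm
            _ = Real.exp s := by rw [hsu]; ring_nf
        rw [hMdef, hpow, hlt]
        calc Real.exp (-(s + x)) * (t / K) ^ (K / 2)
            ≤ Real.exp (-(s + x)) * Real.exp s := by gcongr
          _ = Real.exp (-x) := by rw [← Real.exp_add]; ring_nf
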